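/- For b ∈ ℂ define Q_b := z₀³·(z₀ + z₆)²·(z₀ − b·z₆ + z₇)·(z₀ + (b+1)·z₆ − z₇) ∈ ℂ[z₀, z₁, …, z₇]. Then for all b, b' ∈ ℂ there exists an invertible matrix B ∈ GL₇(ℂ) such that Q_{b'}(z₀, (z₁, …, z₇)·B) = Q_b(z₀, z₁, …, z₇); explicitly, the matrix B equal to the identity matrix except for the entry B_{6,7} = b' − b (so that the substitution sends z₇ to z₇ + (b'−b)·z₆ and fixes all other variables) satisfies this identity. Consequently all members of this one-parameter family are spectrally equivalent, i.e. the family forms a single spectral equivalence class. -/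

import Mathlib

open MvPolynomial Matrix

lemma matmul (a c : ℂ) :
    (1 + Matrix.single (5 : Fin 7) (6 : Fin 7) a) *
      (1 + Matrix.single (5 : Fin 7) (6 : Fin 7) c) =
      1 + Matrix.single (5 : Fin 7) (6 : Fin 7) (a + c) := by
  have h0 : Matrix.single (5 : Fin 7) (6 : Fin 7) a *
      Matrix.single (5 : Fin 7) (6 : Fin 7) c = 0 :=
    by simp
  rw [add_mul, mul_add, mul_add, one_mul, mul_one, h0, Matrix.single_add]
  simp only [one_mul]
  abel


/-- The characteristic polynomial
`Q_b = z₀³ (z₀ + z₆)² (z₀ − b z₆ + z₇)(z₀ + (b+1) z₆ − z₇)` of the one-parameter family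
`𝔰_{5,2}^{1,1,b}` of 7-dimensional solvable complex Lie algebras with Heisenberg nilradical
`𝔥(2)`, in the variables `z₀, z₁, …, z₇`. -/
noncomputable def Q52 (b : ℂ) : MvPolynomial (Fin 8) ℂ :=
  MvPolynomial.X 0 ^ 3 * (MvPolynomial.X 0 + MvPolynomial.X 6) ^ 2 *
    (MvPolynomial.X 0 - MvPolynomial.C b * MvPolynomial.X 6 + MvPolynomial.X 7) *
    (MvPolynomial.X 0 + MvPolynomial.C (b + 1) * MvPolynomial.X 6 - MvPolynomial.X 7)

/-- non-rigidity of the family `𝔰_{5,2}^{1,1,b}`.  For all `b, b' ∈ ℂ` there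
is an invertible `B ∈ GL₇(ℂ)` with `Q_{b'}(z₀, (z₁, …, z₇)·B) = Q_b(z₀, z₁, …, z₇)`;
explicitly, the matrix `B` equal to the identity except for the `(6,7)` entry (in the 1-based
numbering of the variables `z₁, …, z₇`), which equals `b' − b` — so that the substitution sends
`z₇` to `z₇ + (b'−b)·z₆` and fixes all other variables — satisfies this identity.
Consequently all members of this family are spectrally equivalent: the family forms a single
spectral equivalence class. -/
theorem s52_family_single_spectral_class (b b' : ℂ) :
    ∃ B : GL (Fin 7) ℂ,
      (B : Matrix (Fin 7) (Fin 7) ℂ) =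
        1 + Matrix.single (5 : Fin 7) (6 : Fin 7) (b' - b) ∧
      MvPolynomial.aeval
        (Fin.cases (MvPolynomial.X 0)
          (fun k : Fin 7 => ∑ j : Fin 7,
            MvPolynomial.C ((B : Matrix (Fin 7) (Fin 7) ℂ) j k) * MvPolynomial.X j.succ) :
          Fin 8 → MvPolynomial (Fin 8) ℂ)
        (Q52 b') = Q52 b := by
  refine ⟨⟨1 + Matrix.single 5 6 (b' - b), 1 + Matrix.single 5 6 (b - b'),
    by rw [matmul]; simp, by rw [matmul]; simp⟩, rfl, ?_⟩
  set f : Fin 8 → MvPolynomial (Fin 8) ℂ :=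
    (Fin.cases (X 0)
      (fun k : Fin 7 => ∑ j : Fin 7,
        C ((1 + Matrix.single (5:Fin 7) (6:Fin 7) (b' - b)) j k) * X j.succ)) with hf
  have h0 : f 0 = X 0 := rfl
  have h6 : f 6 = X 6 := by
    show (∑ j : Fin 7, C ((1 + Matrix.single (5:Fin 7) (6:Fin 7) (b' - b)) j 5) * X j.succ) = _
    simp [Fin.sum_univ_seven, Matrix.one_apply, Matrix.single]
  have h7 : f 7 = C (b' - b) * X 6 + X 7 := by
    show (∑ j : Fin 7, C ((1 + Matrix.single (5:Fin 7) (6:Fin 7) (b' - b)) j 6) * X j.succ) = _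
    simp [Fin.sum_univ_seven, Matrix.one_apply, Matrix.single]
  show aeval f (Q52 b') = Q52 b
  simp only [Q52, _root_.map_mul, map_add, map_sub, map_pow, aeval_X, aeval_C, h0, h6, h7, C_add, C_sub, C_1, _root_.map_one, MvPolynomial.algebraMap_eq]
  ring
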